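/- Let θ ∈ (0,1) and let ψ_θ(t) = (1−θ)/(e^t − θ) for t ≥ 0 be the Ali-Mikhail-Haq generator. Then for every d ≥ 0 and every t > 0, the d-th derivative of ψ_θ satisfies (−1)^d ψ_θ^{(d)}(t) = ((1−θ)/θ) · Li_{−d}(θ e^{−t}), where Li_{−d}(z) = ∑_{k=1}^∞ k^d z^k is the polylogarithm of order −d (the series converging since 0 < θ e^{−t} < 1). -/

import Mathlib

lemma amh_summable (d : ℕ) {r : ℝ} (hr0 : 0 ≤ r) (hr1 : r < 1) :
    Summable fun k : ℕ => ((k : ℝ) + 1) ^ d * r ^ (k + 1) := by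
  have h : Summable fun n : ℕ => (n : ℝ) ^ d * r ^ n :=
    summable_pow_mul_geometric_of_norm_lt_one d
      (by rwa [Real.norm_eq_abs, abs_of_nonneg hr0])
  have h2 := (summable_nat_add_iff 1).2 h
  refine h2.congr fun k => ?_
  push_cast
  ring

lemma amh_hasDerivAt (θ : ℝ) (d k : ℕ) (y : ℝ) :
    HasDerivAt (fun y => ((k : ℝ) + 1) ^ d * (θ * Real.exp (-y)) ^ (k + 1))
      (-(((k : ℝ) + 1) ^ (d + 1) * (θ * Real.exp (-y)) ^ (k + 1))) y := by
  have hexp : HasDerivAt (fun y : ℝ => Real.exp ((-((k : ℝ) + 1)) * y))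
      (Real.exp ((-((k : ℝ) + 1)) * y) * (-((k : ℝ) + 1))) y := by
    simpa using ((hasDerivAt_id y).const_mul (-((k : ℝ) + 1))).exp
  have h := hexp.const_mul (((k : ℝ) + 1) ^ d * θ ^ (k + 1))
  have hfun : ∀ y : ℝ, ((k : ℝ) + 1) ^ d * θ ^ (k + 1) * Real.exp ((-((k : ℝ) + 1)) * y)
      = ((k : ℝ) + 1) ^ d * (θ * Real.exp (-y)) ^ (k + 1) := by
    intro y
    rw [mul_pow, ← Real.exp_nat_mul]
    push_cast
    ring_nf
  have h' := h.congr_of_eventuallyEq (Filter.Eventually.of_forall fun z => (hfun z).symm)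
  refine h'.congr_deriv ?_
  have heq : Real.exp ((-((k : ℝ) + 1)) * y) = Real.exp (-y) ^ (k + 1) := by
    rw [← Real.exp_nat_mul]
    push_cast
    ring_nf
  rw [heq]
  ring

lemma amh_key (θ : ℝ) (hθ0 : 0 < θ) (hθ1 : θ < 1) (d : ℕ) :
    ∀ t : ℝ, 0 < t → iteratedDeriv d (fun s => (1 - θ) / (Real.exp s - θ)) t
      = (-1 : ℝ) ^ d * ((1 - θ) / θ) *
          ∑' k : ℕ, ((k : ℝ) + 1) ^ d * (θ * Real.exp (-t)) ^ (k + 1) := by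
  induction d with
  | zero =>
    intro t ht
    rw [iteratedDeriv_zero]
    have he1 : (1 : ℝ) < Real.exp t := by
      have := Real.add_one_lt_exp (x := t) (by positivity)
      linarith
    have hx0 : (0 : ℝ) < θ * Real.exp (-t) := mul_pos hθ0 (Real.exp_pos _)
    have hxe : Real.exp (-t) < 1 := by
      rw [Real.exp_neg]
      rw [inv_lt_one₀ (Real.exp_pos t)]
      exact he1
    have hx1 : θ * Real.exp (-t) < 1 := by nlinarith [Real.exp_pos (-t)]
    have hsum : ∑' k : ℕ, ((k : ℝ) + 1) ^ 0 * (θ * Real.exp (-t)) ^ (k + 1)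
        = (θ * Real.exp (-t)) * (1 - θ * Real.exp (-t))⁻¹ := by
      simp only [pow_zero, one_mul, pow_succ']
      rw [tsum_mul_left, tsum_geometric_of_lt_one hx0.le hx1]
    rw [hsum, Real.exp_neg]
    have h1 : Real.exp t - θ ≠ 0 := by nlinarith
    have h2 : Real.exp t ≠ 0 := (Real.exp_pos t).ne'
    have h3 : 1 - θ * (Real.exp t)⁻¹ ≠ 0 := by
      rw [Real.exp_neg] at hx1
      nlinarith
    field_simp
  | succ d ih =>
    intro t ht
    have hth : 0 < t / 2 := by linarith
    have hxh1 : θ * Real.exp (-(t / 2)) < 1 := by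
      have : Real.exp (-(t / 2)) < 1 := by
        rw [Real.exp_lt_one_iff]; linarith
      nlinarith [Real.exp_pos (-(t / 2))]
    have hxh0 : (0 : ℝ) ≤ θ * Real.exp (-(t / 2)) := by positivity
    have hx1 : θ * Real.exp (-t) < 1 := by
      have : Real.exp (-t) < 1 := by rw [Real.exp_lt_one_iff]; linarith
      nlinarith [Real.exp_pos (-t)]
    have hsum_u : Summable fun k : ℕ => ((k : ℝ) + 1) ^ (d + 1) * (θ * Real.exp (-(t / 2))) ^ (k + 1) :=
      amh_summable _ hxh0 hxh1
    have hderiv : HasDerivAt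
        (fun y => ∑' k : ℕ, ((k : ℝ) + 1) ^ d * (θ * Real.exp (-y)) ^ (k + 1))
        (∑' k : ℕ, -(((k : ℝ) + 1) ^ (d + 1) * (θ * Real.exp (-t)) ^ (k + 1))) t := by
      apply hasDerivAt_tsum_of_isPreconnected hsum_u isOpen_Ioi
        (isPreconnected_Ioi (a := t / 2))
        (fun n y _ => amh_hasDerivAt θ d n y) ?_ (Set.mem_Ioi.2 (by linarith))
        (amh_summable d (by positivity) hx1) (Set.mem_Ioi.2 (by linarith))
      intro k y hy
      rw [norm_neg, Real.norm_eq_abs, abs_of_nonneg (by positivity)]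
      gcongr
      all_goals first
        | exact hθ0.le
        | exact hxh0
        | linarith [Set.mem_Ioi.1 hy]
        | positivity
    rw [iteratedDeriv_succ]
    have hEq : iteratedDeriv d (fun s => (1 - θ) / (Real.exp s - θ)) =ᶠ[nhds t]
        fun y => (-1 : ℝ) ^ d * ((1 - θ) / θ) *
          ∑' k : ℕ, ((k : ℝ) + 1) ^ d * (θ * Real.exp (-y)) ^ (k + 1) := by
      filter_upwards [Ioi_mem_nhds ht] with y hy
      exact ih y (Set.mem_Ioi.1 hy)
    rw [hEq.deriv_eq]
    rw [(hderiv.const_mul ((-1 : ℝ) ^ d * ((1 - θ) / θ))).deriv]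
    rw [tsum_neg]
    rw [pow_succ]
    ring



/-- Derivatives of the Ali-Mikhail-Haq generator `ψ_θ(t) = (1−θ)/(eᵗ−θ)`:
`(−1)^d ψ_θ^{(d)}(t) = ((1−θ)/θ) Li_{−d}(θ e^{−t})`, with
`Li_{−d}(z) = ∑_{k=1}^∞ k^d z^k` convergent. -/
theorem stmt_11 (θ : ℝ) (hθ : θ ∈ Set.Ioo (0:ℝ) 1) (d : ℕ) (t : ℝ) (ht : 0 < t) :
    Summable (fun k : ℕ => ((k : ℝ) + 1) ^ d * (θ * Real.exp (-t)) ^ (k + 1)) ∧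
    (-1 : ℝ) ^ d * iteratedDeriv d (fun s => (1 - θ) / (Real.exp s - θ)) t
      = ((1 - θ) / θ) *
          ∑' k : ℕ, ((k : ℝ) + 1) ^ d * (θ * Real.exp (-t)) ^ (k + 1) := by
  obtain ⟨hθ0, hθ1⟩ := hθ
  have hx1 : θ * Real.exp (-t) < 1 := by
    have : Real.exp (-t) < 1 := by rw [Real.exp_lt_one_iff]; linarith
    nlinarith [Real.exp_pos (-t)]
  refine ⟨amh_summable d (by positivity) hx1, ?_⟩
  rw [amh_key θ hθ0 hθ1 d t ht, ← mul_assoc, ← mul_assoc, ← mul_pow]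
  norm_num
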